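/- Let d_1 ≥ ... ≥ d_n ≥ 1 and let Y_{u,v} denote the number of pairs joining bins u and v (u < v) in a uniformly random pairing with bin sizes d_1,...,d_n. Then E[Σ_{u<v} Y_{u,v} 1_{Y_{u,v} ≥ 2}] = O(U_2), where U_2 = Σ_{u<v} min{[d_u]_2 [d_v]_2/M_1^2, d_u d_v/M_1}. -/

import Mathlib

open Nat

/-- The set of pairings (perfect matchings) of the configuration model with bins of
sizes `d 0, …, d (n-1)`: fixed-point-free involutions of the point set. -/
def pairings (n : ℕ) (d : Fin n → ℕ) :
    Set ((Σ i : Fin n, Fin (d i)) → (Σ i : Fin n, Fin (d i))) :=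
  {f | Function.Involutive f ∧ ∀ x, f x ≠ x}

/-- `edgeMult n d f u v` is the multiplicity `Y_{u,v}`: the number of points of bin `u`
matched by `f` into bin `v`. -/
noncomputable def edgeMult (n : ℕ) (d : Fin n → ℕ)
    (f : (Σ i : Fin n, Fin (d i)) → (Σ i : Fin n, Fin (d i))) (u v : Fin n) : ℕ :=
  Set.ncard {x : Σ i : Fin n, Fin (d i) | x.1 = u ∧ (f x).1 = v}

open Finset


section Counting
variable {S : Type*} [Fintype S] [DecidableEq S]

/-- fixed-point-free involutions as a Finset -/
def PF (S : Type*) [Fintype S] [DecidableEq S] : Finset (S → S) :=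
  Finset.univ.filter (fun f => (∀ x, f (f x) = x) ∧ ∀ x, f x ≠ x)

lemma mem_PF {f : S → S} : f ∈ PF S ↔ Function.Involutive f ∧ ∀ x, f x ≠ x := by
  simp [PF, Function.Involutive]

lemma cj_mem {g : Equiv.Perm S} (hg : ∀ z, g (g z) = z) {f : S → S}
    (hf : f ∈ PF S) : (fun z => g (f (g z))) ∈ PF S := by
  rw [mem_PF] at hf ⊢
  obtain ⟨h1, h2⟩ := hf
  refine ⟨fun z => ?_, fun z hz => ?_⟩
  · show g (f (g (g (f (g z))))) = z
    rw [hg, h1, hg]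
  · apply h2 (g z)
    have := congrArg g hz
    rwa [hg] at this

lemma card_conj (g : Equiv.Perm S) (hg : ∀ z, g (g z) = z)
    (p q : (S → S) → Prop) [DecidablePred p] [DecidablePred q]
    (hpq : ∀ f, f ∈ PF S → p f → q (fun z => g (f (g z))))
    (hqp : ∀ f, f ∈ PF S → q f → p (fun z => g (f (g z)))) :
    ((PF S).filter p).card = ((PF S).filter q).card := by
  apply Finset.card_bij' (fun f _ => fun z => g (f (g z))) (fun f _ => fun z => g (f (g z)))
  · intro f hf
    rw [mem_filter] at hf ⊢
    exact ⟨cj_mem hg hf.1, hpq f hf.1 hf.2⟩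
  · intro f hf
    rw [mem_filter] at hf ⊢
    exact ⟨cj_mem hg hf.1, hqp f hf.1 hf.2⟩
  · intro f _
    funext z
    simp [hg]
  · intro f _
    funext z
    simp [hg]

lemma cardA_mul (x y : S) (hy : y ≠ x) :
    ((PF S).filter (fun f => f x = y)).card * (Fintype.card S - 1) = (PF S).card := by
  classical
  have hpart : PF S = (Finset.univ.erase x).biUnion
      (fun z => (PF S).filter (fun f => f x = z)) := by
    ext f
    simp only [mem_biUnion, mem_filter, mem_erase, mem_univ, and_true, true_and]
    constructor
    · intro hf
      exact ⟨f x, (mem_PF.1 hf).2 x, hf, rfl⟩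
    · rintro ⟨z, _, hf, _⟩; exact hf
  have hdisj : ∀ z₁ ∈ Finset.univ.erase x, ∀ z₂ ∈ Finset.univ.erase x, z₁ ≠ z₂ →
      Disjoint ((PF S).filter (fun f => f x = z₁)) ((PF S).filter (fun f => f x = z₂)) := by
    intro z₁ _ z₂ _ hne
    refine Finset.disjoint_left.2 ?_
    intro f h1 h2
    rw [mem_filter] at h1 h2
    exact hne (h1.2 ▸ h2.2 ▸ rfl)
  have hcards : ∀ z ∈ Finset.univ.erase x,
      ((PF S).filter (fun f => f x = z)).card = ((PF S).filter (fun f => f x = y)).card := by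
    intro z hz
    rw [mem_erase] at hz
    refine card_conj (Equiv.swap z y) (fun w => Equiv.swap_apply_self _ _ _) _ _ ?_ ?_
    · intro f _ hf
      have hx : Equiv.swap z y x = x := Equiv.swap_apply_of_ne_of_ne (Ne.symm hz.1) (Ne.symm hy)
      simp only [hx, hf, Equiv.swap_apply_left]
    · intro f _ hf
      have hx : Equiv.swap z y x = x := Equiv.swap_apply_of_ne_of_ne (Ne.symm hz.1) (Ne.symm hy)
      simp only [hx, hf, Equiv.swap_apply_right]
  calc ((PF S).filter (fun f => f x = y)).card * (Fintype.card S - 1)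
      = ∑ z ∈ Finset.univ.erase x, ((PF S).filter (fun f => f x = z)).card := by
        rw [Finset.sum_congr rfl hcards, Finset.sum_const, smul_eq_mul,
          Finset.card_erase_of_mem (mem_univ x), Finset.card_univ, Nat.mul_comm]
    _ = ((Finset.univ.erase x).biUnion
          (fun z => (PF S).filter (fun f => f x = z))).card := (Finset.card_biUnion hdisj).symm
    _ = (PF S).card := by rw [← hpart]

lemma cardB_mul_le (x x' y y' : S) (hxx : x ≠ x') (h1 : y ≠ x) (h2 : y ≠ x')
    (h3 : y' ≠ x) (h4 : y' ≠ x') (hyy : y ≠ y') :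
    ((PF S).filter (fun f => f x = y ∧ f x' = y')).card * (Fintype.card S - 3)
      ≤ ((PF S).filter (fun f => f x = y)).card := by
  classical
  set T : Finset S := Finset.univ \ {x, x', y} with hT
  have hTcard : T.card = Fintype.card S - 3 := by
    rw [hT, Finset.card_sdiff_of_subset (Finset.subset_univ _), Finset.card_univ]
    congr 1
    rw [Finset.card_insert_of_notMem (by simp [hxx, Ne.symm h1]),
      Finset.card_insert_of_notMem (by simp [Ne.symm h2]), Finset.card_singleton]
  have hcards : ∀ z ∈ T,
      ((PF S).filter (fun f => f x = y ∧ f x' = z)).card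
        = ((PF S).filter (fun f => f x = y ∧ f x' = y')).card := by
    intro z hz
    simp only [hT, Finset.mem_sdiff, Finset.mem_insert, Finset.mem_singleton, mem_univ,
      true_and, not_or] at hz
    obtain ⟨hz1, hz2, hz3⟩ := hz
    refine card_conj (Equiv.swap z y') (fun w => Equiv.swap_apply_self _ _ _) _ _ ?_ ?_
    · intro f _ hf
      have hx : Equiv.swap z y' x = x := Equiv.swap_apply_of_ne_of_ne (Ne.symm hz1) (Ne.symm h3)
      have hx' : Equiv.swap z y' x' = x' := Equiv.swap_apply_of_ne_of_ne (Ne.symm hz2) (Ne.symm h4)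
      have hy : Equiv.swap z y' y = y :=
        Equiv.swap_apply_of_ne_of_ne (Ne.symm hz3) hyy
      simp only [hx, hx', hf.1, hf.2, hy, Equiv.swap_apply_left, and_true]
    · intro f _ hf
      have hx : Equiv.swap z y' x = x := Equiv.swap_apply_of_ne_of_ne (Ne.symm hz1) (Ne.symm h3)
      have hx' : Equiv.swap z y' x' = x' := Equiv.swap_apply_of_ne_of_ne (Ne.symm hz2) (Ne.symm h4)
      have hy : Equiv.swap z y' y = y :=
        Equiv.swap_apply_of_ne_of_ne (Ne.symm hz3) hyy
      simp only [hx, hx', hf.1, hf.2, hy, Equiv.swap_apply_right, and_true]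
  have hdisj : ∀ z₁ ∈ T, ∀ z₂ ∈ T, z₁ ≠ z₂ →
      Disjoint ((PF S).filter (fun f => f x = y ∧ f x' = z₁))
        ((PF S).filter (fun f => f x = y ∧ f x' = z₂)) := by
    intro z₁ _ z₂ _ hne
    refine Finset.disjoint_left.2 ?_
    intro f hf1 hf2
    rw [mem_filter] at hf1 hf2
    exact hne (hf1.2.2 ▸ hf2.2.2 ▸ rfl)
  calc ((PF S).filter (fun f => f x = y ∧ f x' = y')).card * (Fintype.card S - 3)
      = ∑ z ∈ T, ((PF S).filter (fun f => f x = y ∧ f x' = z)).card := by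
        rw [Finset.sum_congr rfl hcards, Finset.sum_const, smul_eq_mul, hTcard, Nat.mul_comm]
    _ = (T.biUnion (fun z => (PF S).filter (fun f => f x = y ∧ f x' = z))).card :=
        (Finset.card_biUnion hdisj).symm
    _ ≤ ((PF S).filter (fun f => f x = y)).card := by
        apply Finset.card_le_card
        intro f hf
        rw [Finset.mem_biUnion] at hf
        obtain ⟨z, _, hf⟩ := hf
        rw [mem_filter] at hf ⊢
        exact ⟨hf.1, hf.2.1⟩

end Counting

section Sums
variable {S : Type*} [Fintype S] [DecidableEq S]

lemma sum_Y_mul (U V : Finset S) (hUV : ∀ a ∈ U, ∀ b ∈ V, b ≠ a) :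
    (∑ f ∈ PF S, (U.filter (fun x => f x ∈ V)).card) * (Fintype.card S - 1)
      = U.card * V.card * (PF S).card := by
  have key : ∀ f : S → S, (U.filter (fun x => f x ∈ V)).card
      = ∑ x ∈ U, ∑ y ∈ V, if f x = y then 1 else 0 := by
    intro f
    rw [Finset.card_filter]
    refine Finset.sum_congr rfl fun x _ => ?_
    rw [Finset.sum_ite_eq V (f x) (fun _ => 1)]
  calc (∑ f ∈ PF S, (U.filter (fun x => f x ∈ V)).card) * (Fintype.card S - 1)
      = (∑ x ∈ U, ∑ y ∈ V, ((PF S).filter (fun f => f x = y)).card)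
          * (Fintype.card S - 1) := by
        congr 1
        rw [Finset.sum_congr rfl (fun f _ => key f), Finset.sum_comm]
        refine Finset.sum_congr rfl fun x _ => ?_
        rw [Finset.sum_comm]
        refine Finset.sum_congr rfl fun y _ => ?_
        rw [Finset.card_filter]
    _ = ∑ x ∈ U, ∑ y ∈ V, ((PF S).filter (fun f => f x = y)).card
          * (Fintype.card S - 1) := by
        rw [Finset.sum_mul]
        exact Finset.sum_congr rfl fun x _ => by rw [Finset.sum_mul]
    _ = ∑ x ∈ U, ∑ y ∈ V, (PF S).card := by
        refine Finset.sum_congr rfl fun x hx => Finset.sum_congr rfl fun y hy => ?_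
        exact cardA_mul x y (hUV x hx y hy)
    _ = U.card * V.card * (PF S).card := by
        simp [Finset.sum_const, smul_eq_mul, mul_assoc]

lemma sum_Y2_mul_le (U V : Finset S) (hUV : ∀ a ∈ U, ∀ b ∈ V, b ≠ a) :
    (∑ f ∈ PF S, (U.filter (fun x => f x ∈ V)).card
        * ((U.filter (fun x => f x ∈ V)).card - 1))
      * ((Fintype.card S - 1) * (Fintype.card S - 3))
      ≤ U.card * (U.card - 1) * (V.card * (V.card - 1)) * (PF S).card := by
  have key : ∀ f : S → S, (U.filter (fun x => f x ∈ V)).card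
        * ((U.filter (fun x => f x ∈ V)).card - 1)
      = ∑ p ∈ U.offDiag, ∑ q ∈ V ×ˢ V,
          if f p.1 = q.1 ∧ f p.2 = q.2 then 1 else 0 := by
    intro f
    have h1 : (U.filter (fun x => f x ∈ V)).offDiag
        = (U.offDiag).filter (fun p => f p.1 ∈ V ∧ f p.2 ∈ V) := by
      ext p
      simp only [Finset.mem_offDiag, Finset.mem_filter]
      tauto
    have h2 : (U.filter (fun x => f x ∈ V)).card
          * ((U.filter (fun x => f x ∈ V)).card - 1)
        = (U.filter (fun x => f x ∈ V)).offDiag.card := by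
      rw [Finset.offDiag_card, Nat.mul_sub, Nat.mul_one]
    rw [h2, h1, Finset.card_filter]
    refine Finset.sum_congr rfl fun p _ => ?_
    have hsplit : ∀ y y' : S, (if f p.1 = y ∧ f p.2 = y' then (1:ℕ) else 0)
        = (if f p.1 = y then 1 else 0) * (if f p.2 = y' then 1 else 0) := by
      intro y y'
      by_cases h1 : f p.1 = y <;> by_cases h2 : f p.2 = y' <;> simp [h1, h2]
    rw [Finset.sum_product]
    simp only [hsplit, ← Finset.mul_sum, ← Finset.sum_mul]
    rw [Finset.sum_ite_eq V (f p.1) (fun _ => 1), Finset.sum_ite_eq V (f p.2) (fun _ => 1)]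
    by_cases h1 : f p.1 ∈ V <;> by_cases h2 : f p.2 ∈ V <;> simp [h1, h2]
  calc (∑ f ∈ PF S, (U.filter (fun x => f x ∈ V)).card
        * ((U.filter (fun x => f x ∈ V)).card - 1))
      * ((Fintype.card S - 1) * (Fintype.card S - 3))
      = (∑ p ∈ U.offDiag, ∑ q ∈ V ×ˢ V,
          ((PF S).filter (fun f => f p.1 = q.1 ∧ f p.2 = q.2)).card)
        * ((Fintype.card S - 1) * (Fintype.card S - 3)) := by
        congr 1
        rw [Finset.sum_congr rfl (fun f _ => key f), Finset.sum_comm]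
        refine Finset.sum_congr rfl fun p _ => ?_
        rw [Finset.sum_comm]
        refine Finset.sum_congr rfl fun q _ => ?_
        rw [Finset.card_filter]
    _ = ∑ p ∈ U.offDiag, ∑ q ∈ V ×ˢ V,
          ((PF S).filter (fun f => f p.1 = q.1 ∧ f p.2 = q.2)).card
            * ((Fintype.card S - 1) * (Fintype.card S - 3)) := by
        rw [Finset.sum_mul]
        exact Finset.sum_congr rfl fun p _ => by rw [Finset.sum_mul]
    _ ≤ ∑ p ∈ U.offDiag, ∑ q ∈ V ×ˢ V,
          (if q.1 ≠ q.2 then (PF S).card else 0) := by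
        refine Finset.sum_le_sum fun p hp => Finset.sum_le_sum fun q hq => ?_
        rw [Finset.mem_offDiag] at hp
        rw [Finset.mem_product] at hq
        by_cases hqq : q.1 = q.2
        · -- y = y' : the filter is empty
          have : ((PF S).filter (fun f => f p.1 = q.1 ∧ f p.2 = q.2)).card = 0 := by
            rw [Finset.card_eq_zero, Finset.filter_eq_empty_iff]
            rintro f hf ⟨e1, e2⟩
            have hinj := (mem_PF.1 hf).1.injective
            exact hp.2.2 (hinj (by rw [e1, e2, hqq]))
          simp [this]
        · rw [if_pos (by exact hqq)]
          have hb := cardB_mul_le p.1 p.2 q.1 q.2 hp.2.2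
            (hUV p.1 hp.1 q.1 hq.1) (hUV p.2 hp.2.1 q.1 hq.1)
            (hUV p.1 hp.1 q.2 hq.2) (hUV p.2 hp.2.1 q.2 hq.2) hqq
          calc ((PF S).filter (fun f => f p.1 = q.1 ∧ f p.2 = q.2)).card
                * ((Fintype.card S - 1) * (Fintype.card S - 3))
              = ((PF S).filter (fun f => f p.1 = q.1 ∧ f p.2 = q.2)).card
                  * (Fintype.card S - 3) * (Fintype.card S - 1) := by ring
            _ ≤ ((PF S).filter (fun f => f p.1 = q.1)).card * (Fintype.card S - 1) :=
                Nat.mul_le_mul_right _ hb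
            _ = (PF S).card := cardA_mul p.1 q.1 (hUV p.1 hp.1 q.1 hq.1)
    _ = U.card * (U.card - 1) * (V.card * (V.card - 1)) * (PF S).card := by
        have hin : ∀ p ∈ U.offDiag, ∑ q ∈ V ×ˢ V, (if q.1 ≠ q.2 then (PF S).card else 0)
            = V.card * (V.card - 1) * (PF S).card := by
          intro p _
          rw [← Finset.sum_filter]
          rw [show (V ×ˢ V).filter (fun q => q.1 ≠ q.2) = V.offDiag from by ext q; simp [Finset.mem_offDiag, and_assoc]]
          rw [Finset.sum_const, smul_eq_mul, Finset.offDiag_card, Nat.mul_sub, Nat.mul_one]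
        rw [Finset.sum_congr rfl hin, Finset.sum_const, smul_eq_mul, Finset.offDiag_card,
          Nat.mul_sub, Nat.mul_one, mul_assoc, Nat.mul_sub, Nat.mul_one]

end Sums

section KeyBound
variable {S : Type*} [Fintype S] [DecidableEq S]

lemma filter_card_le_V {f : S → S} (hf : f ∈ PF S) (U V : Finset S) :
    (U.filter (fun x => f x ∈ V)).card ≤ V.card := by
  apply Finset.card_le_card_of_injOn f
  · intro x hx; exact (Finset.mem_filter.1 hx).2
  · intro a _ b _ h
    exact (mem_PF.1 hf).1.injective h

lemma nat_div_le {Ys K A P : ℕ} (h : Ys * K ≤ A * P) (hK : 0 < K) (hP : 0 < P) :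
    (Ys : ℝ) / P ≤ (A : ℝ) / K := by
  rw [div_le_div_iff₀ (by exact_mod_cast hP) (by exact_mod_cast hK)]
  exact_mod_cast h

lemma ite_le_id (k : ℕ) : (if 2 ≤ k then k else 0) ≤ k := by
  split <;> omega

lemma ite_le_sq (k : ℕ) : (if 2 ≤ k then k else 0) ≤ k * (k - 1) := by
  split
  · rename_i h
    exact Nat.le_mul_of_pos_right k (by omega)
  · exact Nat.zero_le _

lemma assemble {Ys P M A B : ℕ} (hP : 0 < P) (hM4 : 4 ≤ M)
    (hb1 : Ys * (M - 1) ≤ B * P) (hb2 : Ys * ((M - 1) * (M - 3)) ≤ A * P) :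
    (Ys : ℝ) / P ≤ 6 * min ((A : ℝ) / (M : ℝ) ^ 2) ((B : ℝ) / (M : ℝ)) := by
  have hKpos : 0 < (M - 1) * (M - 3) := Nat.mul_pos (by omega) (by omega)
  have h1 : (Ys:ℝ)/P ≤ (A : ℝ) / (((M-1)*(M-3) : ℕ) : ℝ) := nat_div_le hb2 hKpos hP
  have h2 : (Ys:ℝ)/P ≤ (B : ℝ) / ((M-1 : ℕ) : ℝ) := nat_div_le hb1 (by omega) hP
  have hA6 : (A:ℝ) / (((M-1)*(M-3) : ℕ):ℝ) ≤ 6 * ((A:ℝ) / (M:ℝ)^2) := by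
    have hnat : M * M ≤ 6 * ((M-1)*(M-3)) := by
      obtain ⟨b, rfl⟩ : ∃ b, M = b + 4 := ⟨M - 4, by omega⟩
      have e1 : b + 4 - 1 = b + 3 := by omega
      have e2 : b + 4 - 3 = b + 1 := by omega
      rw [e1, e2]
      nlinarith
    have hcast : (M:ℝ) * (M:ℝ) ≤ 6 * (((M-1)*(M-3) : ℕ):ℝ) := by exact_mod_cast hnat
    rw [mul_div_assoc']
    rw [div_le_div_iff₀ (by exact_mod_cast hKpos) (by positivity)]
    have hAnn : (0:ℝ) ≤ (A:ℝ) := Nat.cast_nonneg _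
    nlinarith [mul_le_mul_of_nonneg_left hcast hAnn]
  have hB6 : (B:ℝ) / ((M-1 : ℕ):ℝ) ≤ 6 * ((B:ℝ) / (M:ℝ)) := by
    have hcast : (M:ℝ) ≤ 6 * ((M-1 : ℕ):ℝ) := by
      exact_mod_cast (show M ≤ 6 * (M-1) by omega)
    rw [mul_div_assoc']
    rw [div_le_div_iff₀ (by exact_mod_cast (show (0:ℕ) < M - 1 by omega)) (by positivity)]
    have hBnn : (0:ℝ) ≤ (B:ℝ) := Nat.cast_nonneg _
    nlinarith [mul_le_mul_of_nonneg_left hcast hBnn]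
  rcases le_total ((A:ℝ) / (M:ℝ)^2) ((B:ℝ) / (M:ℝ)) with hab | hab
  · rw [min_eq_left hab]
    exact le_trans h1 hA6
  · rw [min_eq_right hab]
    exact le_trans h2 hB6

lemma key_bound (U V : Finset S) (hUV : ∀ a ∈ U, ∀ b ∈ V, b ≠ a)
    (hP : 0 < (PF S).card) :
    ((∑ f ∈ PF S, if 2 ≤ (U.filter (fun x => f x ∈ V)).card
        then (U.filter (fun x => f x ∈ V)).card else 0 : ℕ) : ℝ) / ((PF S).card : ℝ)
      ≤ 6 * min (((U.card * (U.card - 1) * (V.card * (V.card - 1)) : ℕ) : ℝ)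
            / ((Fintype.card S : ℕ) : ℝ) ^ 2)
          (((U.card * V.card : ℕ) : ℝ) / ((Fintype.card S : ℕ) : ℝ)) := by
  have hmin_nonneg : (0:ℝ) ≤ min (((U.card * (U.card - 1) * (V.card * (V.card - 1)) : ℕ) : ℝ)
            / ((Fintype.card S : ℕ) : ℝ) ^ 2)
          (((U.card * V.card : ℕ) : ℝ) / ((Fintype.card S : ℕ) : ℝ)) :=
    le_min (by positivity) (by positivity)
  by_cases hsmall : U.card ≤ 1 ∨ V.card ≤ 1
  · have hz : (∑ f ∈ PF S, if 2 ≤ (U.filter (fun x => f x ∈ V)).card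
        then (U.filter (fun x => f x ∈ V)).card else 0) = 0 := by
      apply Finset.sum_eq_zero
      intro f hf
      rw [if_neg]
      intro h2
      have h3 : (U.filter (fun x => f x ∈ V)).card ≤ U.card := Finset.card_le_card
        (Finset.filter_subset _ _)
      have h4 := filter_card_le_V hf U V
      rcases hsmall with h | h <;> omega
    rw [hz]
    simpa using mul_nonneg (by norm_num : (0:ℝ) ≤ 6) hmin_nonneg
  · push_neg at hsmall
    obtain ⟨hU2, hV2⟩ := hsmall
    have hdisj : Disjoint U V := by
      rw [Finset.disjoint_left]
      intro a ha hb
      exact hUV a ha a hb rfl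
    have hM4 : 4 ≤ Fintype.card S := by
      have h5 := Finset.card_le_univ (U ∪ V)
      rw [Finset.card_union_of_disjoint hdisj] at h5
      omega
    have hb1 : (∑ f ∈ PF S, if 2 ≤ (U.filter (fun x => f x ∈ V)).card
          then (U.filter (fun x => f x ∈ V)).card else 0) * (Fintype.card S - 1)
        ≤ U.card * V.card * (PF S).card := by
      rw [← sum_Y_mul U V hUV]
      exact Nat.mul_le_mul_right _ (Finset.sum_le_sum fun f _ => ite_le_id _)
    have hb2 : (∑ f ∈ PF S, if 2 ≤ (U.filter (fun x => f x ∈ V)).card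
          then (U.filter (fun x => f x ∈ V)).card else 0)
          * ((Fintype.card S - 1) * (Fintype.card S - 3))
        ≤ U.card * (U.card - 1) * (V.card * (V.card - 1)) * (PF S).card := by
      exact le_trans
        (Nat.mul_le_mul_right _ (Finset.sum_le_sum fun f _ => ite_le_sq _))
        (sum_Y2_mul_le U V hUV)
    exact assemble hP hM4 hb1 hb2

end KeyBound
lemma card_bin (n : ℕ) (d : Fin n → ℕ) (u : Fin n) :
    (Finset.univ.filter (fun x : Σ i : Fin n, Fin (d i) => x.1 = u)).card = d u := by
  rw [Finset.card_filter, ← Finset.univ_sigma_univ, Finset.sum_sigma]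
  simp [Finset.sum_ite_eq', apply_ite]

lemma cardS_eq (n : ℕ) (d : Fin n → ℕ) :
    Fintype.card (Σ i : Fin n, Fin (d i)) = ∑ i, d i := by simp

lemma edge_eq (n : ℕ) (d : Fin n → ℕ)
    (f : (Σ i : Fin n, Fin (d i)) → (Σ i : Fin n, Fin (d i))) (u v : Fin n) :
    edgeMult n d f u v
      = ((Finset.univ.filter (fun x : Σ i : Fin n, Fin (d i) => x.1 = u)).filter
          (fun x => f x ∈ Finset.univ.filter
            (fun y : Σ i : Fin n, Fin (d i) => y.1 = v))).card := by
  rw [edgeMult, Set.ncard_eq_toFinset_card', Set.toFinset_setOf, Finset.filter_filter]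
  refine congrArg Finset.card ?_
  apply Finset.filter_congr
  intro x _
  simp

lemma pairings_eq (n : ℕ) (d : Fin n → ℕ) :
    pairings n d = ↑(PF ((Σ i : Fin n, Fin (d i)))) := by
  ext f
  simp [pairings, PF, Function.Involutive]

/-- In a uniformly random pairing with bin sizes `d₁ ≥ ⋯ ≥ dₙ ≥ 1`,
`E[∑_{u<v} Y_{u,v} 1_{Y_{u,v} ≥ 2}] = O(U₂)` where
`U₂ = ∑_{u<v} min{[d_u]₂[d_v]₂/M₁², d_u d_v/M₁}`. -/
theorem stmt_12 :
    ∃ C : ℝ, 0 < C ∧ ∀ (n : ℕ) (d : Fin n → ℕ), 0 < n → (∀ i, 1 ≤ d i) →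
      Even (∑ i, d i) → Antitone d →
      (∑' f : pairings n d, ∑ u : Fin n, ∑ v : Fin n,
            if u < v ∧ 2 ≤ edgeMult n d f.1 u v then (edgeMult n d f.1 u v : ℝ) else 0) /
          ((pairings n d).ncard : ℝ) ≤
        C * ∑ u : Fin n, ∑ v : Fin n,
            if u < v then
              min ((((d u).descFactorial 2 * (d v).descFactorial 2 : ℕ) : ℝ) /
                  ((∑ i, d i : ℕ) : ℝ) ^ 2)
                (((d u * d v : ℕ) : ℝ) / ((∑ i, d i : ℕ) : ℝ))
            else 0 := by
  refine ⟨6, by norm_num, ?_⟩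
  intro n d hn hd heven hanti
  have hdf : ∀ k : ℕ, k.descFactorial 2 = k * (k - 1) := by
    intro k
    rcases k with _ | m
    · rfl
    · simp [Nat.descFactorial_succ, Nat.descFactorial, Nat.mul_comm]
  rw [pairings_eq n d,
    Finset.tsum_subtype' (PF ((Σ i : Fin n, Fin (d i))))
      (fun g => ∑ u : Fin n, ∑ v : Fin n,
        if u < v ∧ 2 ≤ edgeMult n d g u v then (edgeMult n d g u v : ℝ) else 0),
    Set.ncard_coe_finset]
  rcases Nat.eq_zero_or_pos (PF ((Σ i : Fin n, Fin (d i)))).card with h0 | hP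
  · rw [Finset.card_eq_zero.1 h0]
    simp only [Finset.sum_empty, Nat.cast_zero, Nat.card_eq_zero, Finset.card_empty,
      zero_div]
    refine mul_nonneg (by norm_num)
      (Finset.sum_nonneg fun u _ => Finset.sum_nonneg fun v _ => ?_)
    split
    · exact le_min (by positivity) (by positivity)
    · exact le_refl 0
  · have hswap : (∑ f ∈ PF ((Σ i : Fin n, Fin (d i))), ∑ u : Fin n, ∑ v : Fin n,
          if u < v ∧ 2 ≤ edgeMult n d f u v then (edgeMult n d f u v : ℝ) else 0)
        = ∑ u : Fin n, ∑ v : Fin n, ∑ f ∈ PF ((Σ i : Fin n, Fin (d i))),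
          if u < v ∧ 2 ≤ edgeMult n d f u v then (edgeMult n d f u v : ℝ) else 0 := by
      rw [Finset.sum_comm]
      exact Finset.sum_congr rfl fun u _ => Finset.sum_comm
    rw [hswap, Finset.sum_div, Finset.mul_sum]
    refine Finset.sum_le_sum fun u _ => ?_
    rw [Finset.sum_div, Finset.mul_sum]
    refine Finset.sum_le_sum fun v _ => ?_
    by_cases huv : u < v
    · have hnum : (∑ f ∈ PF ((Σ i : Fin n, Fin (d i))),
            if u < v ∧ 2 ≤ edgeMult n d f u v then (edgeMult n d f u v : ℝ) else 0)
          = ((∑ f ∈ PF ((Σ i : Fin n, Fin (d i))),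
              if 2 ≤ ((Finset.univ.filter (fun x : Σ i : Fin n, Fin (d i) => x.1 = u)).filter
                  (fun x => f x ∈ Finset.univ.filter
                    (fun y : Σ i : Fin n, Fin (d i) => y.1 = v))).card
              then ((Finset.univ.filter (fun x : Σ i : Fin n, Fin (d i) => x.1 = u)).filter
                  (fun x => f x ∈ Finset.univ.filter
                    (fun y : Σ i : Fin n, Fin (d i) => y.1 = v))).card
              else 0 : ℕ) : ℝ) := by
        rw [Nat.cast_sum]
        refine Finset.sum_congr rfl fun f _ => ?_
        rw [edge_eq n d f u v]
        simp [huv, apply_ite (fun k : ℕ => (k : ℝ))]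
      rw [hnum, if_pos huv]
      have hUV : ∀ a ∈ Finset.univ.filter (fun x : Σ i : Fin n, Fin (d i) => x.1 = u),
          ∀ b ∈ Finset.univ.filter (fun y : Σ i : Fin n, Fin (d i) => y.1 = v), b ≠ a := by
        intro a ha b hb hba
        rw [Finset.mem_filter] at ha hb
        exact absurd (hba ▸ hb.2 : a.1 = v) (ha.2 ▸ huv.ne)
      have hkb := key_bound
        (Finset.univ.filter (fun x : Σ i : Fin n, Fin (d i) => x.1 = u))
        (Finset.univ.filter (fun y : Σ i : Fin n, Fin (d i) => y.1 = v)) hUV hP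
      rw [card_bin n d u, card_bin n d v, cardS_eq n d] at hkb
      rw [hdf (d u), hdf (d v)]
      exact hkb
    · have hnum : (∑ f ∈ PF ((Σ i : Fin n, Fin (d i))),
            if u < v ∧ 2 ≤ edgeMult n d f u v then (edgeMult n d f u v : ℝ) else 0) = 0 :=
        Finset.sum_eq_zero fun f _ => if_neg (fun h => huv h.1)
      rw [hnum, if_neg huv, zero_div, mul_zero]
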